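/- For every finite Borel partition [ω]^ω = P₀ ∪ P₁ ∪ ... ∪ P_{k-1} of the infinite subsets of ℕ, there exists an infinite H ⊆ ℕ and an index i < k such that [H]^ω ⊆ P_i. -/
import Mathlib

/-- `[ω]^ω` as a subspace of Cantor space `2^ω` via characteristic functions. -/
def InfCantor : Type := {f : ℕ → Bool // {n | f n = true}.Infinite}

instance : TopologicalSpace InfCantor :=
  instTopologicalSpaceSubtype

instance : MeasurableSpace InfCantor := borel InfCantor

instance : BorelSpace InfCantor := ⟨rfl⟩

/-- `[H]^ω`: the members of `[ω]^ω` all of whose elements lie in `H`. -/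
def cube (H : Set ℕ) : Set InfCantor := {f | ∀ n, f.1 n = true → n ∈ H}

namespace GPaux

open Set
open scoped Classical

/-- `[a, A]` (non-exact version): `a ⊆ f ⊆ a ∪ A`. -/
def seg (a : Finset ℕ) (A : Set ℕ) : Set InfCantor :=
  {f | (∀ n ∈ a, f.1 n = true) ∧ ∀ n, f.1 n = true → n ∈ a ∨ n ∈ A}

/-- `a` lies entirely below `A`. -/
def bel (a : Finset ℕ) (A : Set ℕ) : Prop := ∀ x ∈ a, ∀ y ∈ A, x < y

/-- Completely Ramsey. -/
def CR (X : Set InfCantor) : Prop :=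
  ∀ a A, A.Infinite → bel a A →
    ∃ B, B ⊆ A ∧ B.Infinite ∧ (seg a B ⊆ X ∨ seg a B ∩ X = ∅)

lemma seg_mono {a : Finset ℕ} {B B' : Set ℕ} (h : B ⊆ B') : seg a B ⊆ seg a B' :=
  fun f hf => ⟨hf.1, fun n hn => (hf.2 n hn).imp id (fun h' => h h')⟩

lemma CR_compl {X : Set InfCantor} (h : CR X) : CR Xᶜ := by
  intro a A hA hb
  obtain ⟨B, h1, h2, h3⟩ := h a A hA hb
  refine ⟨B, h1, h2, ?_⟩
  rcases h3 with h3 | h3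
  · exact Or.inr (Set.eq_empty_iff_forall_notMem.mpr fun f hf => hf.2 (h3 hf.1))
  · exact Or.inl fun f hf hfX => Set.eq_empty_iff_forall_notMem.mp h3 f ⟨hf, hfX⟩

lemma CR_empty : CR (∅ : Set InfCantor) := by
  intro a A hA hb
  exact ⟨A, subset_rfl, hA, Or.inr (Set.inter_empty _)⟩

lemma bool_eq_of_iff {x y : Bool} (h : x = true ↔ y = true) : x = y := by
  cases x <;> cases y <;> simp_all

/-- A noncomputable characteristic element of `[∅, B]`. -/
noncomputable def indic (B : Set ℕ) (h : B.Infinite) : InfCantor :=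
  ⟨fun n => if n ∈ B then true else false, by
    convert h using 1
    ext n
    by_cases hn : n ∈ B <;> simp [hn]⟩

lemma indic_mem_seg (B : Set ℕ) (h : B.Infinite) : indic B h ∈ seg ∅ B := by
  constructor
  · intro n hn; exact absurd hn (Finset.notMem_empty n)
  · intro n hn
    right
    by_contra hB
    simp [indic, hB] at hn

/-- Open sets in `InfCantor` are determined by finite initial segments. -/
lemma open_cylinder {X : Set InfCantor} (hX : IsOpen X) {f : InfCantor} (hf : f ∈ X) :
    ∃ N, ∀ g : InfCantor, (∀ i, i < N → g.1 i = f.1 i) → g ∈ X := by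
  obtain ⟨U, hU, hUX⟩ := isOpen_induced_iff.mp hX
  have hfU : f.1 ∈ U := by rw [← hUX] at hf; exact hf
  obtain ⟨I, u, hIu, hpi⟩ := isOpen_pi_iff.mp hU f.1 hfU
  refine ⟨(I.sup id) + 1, fun g hg => ?_⟩
  have : g.1 ∈ U := by
    apply hpi
    intro i hi
    have : g.1 i = f.1 i := hg i (Nat.lt_succ_of_le (Finset.le_sup (f := id) hi))
    rw [this]
    exact (hIu i hi).2
  rw [← hUX]; exact this

/-- Generic chain-construction via choice. -/
lemma exists_chain {σ : Type*} (Inv : σ → Prop) (Rel : σ → σ → Prop) (x0 : σ) (h0 : Inv x0)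
    (hstep : ∀ x, Inv x → ∃ y, Inv y ∧ Rel x y) :
    ∃ g : ℕ → σ, g 0 = x0 ∧ (∀ n, Inv (g n)) ∧ ∀ n, Rel (g n) (g (n + 1)) := by
  choose F hF1 hF2 using hstep
  let G : ℕ → {x // Inv x} := fun n =>
    Nat.rec ⟨x0, h0⟩ (fun _ p => ⟨F p.1 p.2, hF1 p.1 p.2⟩) n
  exact ⟨fun n => (G n).1, rfl, fun n => (G n).2, fun n => hF2 (G n).1 (G n).2⟩


/-- Generic fusion lemma. -/
lemma fusion (Q : Finset ℕ → Set ℕ → Prop) (A₀ : Set ℕ) (hA0 : A₀.Infinite) (h0 : Q ∅ A₀)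
    (hstep : ∀ c C, C.Infinite → C ⊆ A₀ → (∀ x ∈ c, ∀ y ∈ C, x < y) → Q c C →
      ∃ n B, n ∈ C ∧ B ⊆ C ∧ B.Infinite ∧ (∀ y ∈ B, n < y) ∧ Q (insert n c) B) :
    ∃ s : ℕ → ℕ, StrictMono s ∧
      ∀ n : ℕ, ∃ (c : Finset ℕ) (C : Set ℕ), c.card = n ∧ (↑c : Set ℕ) = s '' Set.Iio n ∧ C ⊆ A₀ ∧
        s '' Set.Ici n ⊆ C ∧ Q c C := by
  obtain ⟨g, hg0, hgInv, hgRel⟩ := exists_chain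
    (fun p : ℕ × Finset ℕ × Set ℕ =>
      p.2.2.Infinite ∧ p.2.2 ⊆ A₀ ∧ (∀ x ∈ p.2.1, ∀ y ∈ p.2.2, x < y) ∧ Q p.2.1 p.2.2)
    (fun p q => q.2.1 = insert q.1 p.2.1 ∧ q.2.2 ⊆ p.2.2 ∧ q.1 ∈ p.2.2 ∧ ∀ y ∈ q.2.2, q.1 < y)
    (0, ∅, A₀) ⟨hA0, subset_rfl, by simp, h0⟩
    (by
      rintro ⟨v, c, C⟩ ⟨h1, h2, h3, h4⟩
      obtain ⟨n, B, hn, hB, hBi, hBn, hQ⟩ := hstep c C h1 h2 h3 h4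
      refine ⟨(n, insert n c, B), ⟨hBi, hB.trans h2, ?_, hQ⟩, rfl, hB, hn, hBn⟩
      intro x hx y hy
      rcases Finset.mem_insert.mp hx with rfl | hx
      · exact hBn y hy
      · exact h3 x hx y (hB hy))
  set s : ℕ → ℕ := fun n => (g (n + 1)).1 with hs
  have hc : ∀ n, (g (n + 1)).2.1 = insert (s n) (g n).2.1 := fun n => (hgRel n).1
  have hsub : ∀ n, (g (n + 1)).2.2 ⊆ (g n).2.2 := fun n => (hgRel n).2.1
  have hmem : ∀ n, s n ∈ (g n).2.2 := fun n => (hgRel n).2.2.1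
  have hlt : ∀ n, ∀ y ∈ (g (n + 1)).2.2, s n < y := fun n => (hgRel n).2.2.2
  have hdec : ∀ i j, i ≤ j → (g j).2.2 ⊆ (g i).2.2 := by
    intro i j hij
    induction hij with
    | refl => exact subset_rfl
    | step _ ih => exact (hsub _).trans ih
  have hmono : StrictMono s := by
    apply strictMono_nat_of_lt_succ
    intro n
    exact hlt n (s (n + 1)) (hmem (n + 1))
  have hcoe : ∀ n, ((g n).2.1 : Set ℕ) = s '' Set.Iio n := by
    intro n
    induction n with
    | zero => rw [hg0]; ext x; simp
    | succ n ih =>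
      rw [hc n, Finset.coe_insert, ih]
      ext x
      simp only [Set.mem_insert_iff, Set.mem_image, Set.mem_Iio]
      constructor
      · rintro (rfl | ⟨j, hj, rfl⟩)
        · exact ⟨n, Nat.lt_succ_self n, rfl⟩
        · exact ⟨j, Nat.lt_succ_of_lt hj, rfl⟩
      · rintro ⟨j, hj, rfl⟩
        rcases Nat.lt_succ_iff_lt_or_eq.mp hj with hj | rfl
        · exact Or.inr ⟨j, hj, rfl⟩
        · exact Or.inl rfl
  have hcard : ∀ n, (g n).2.1.card = n := by
    intro n
    induction n with
    | zero => rw [hg0]; rfl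
    | succ n ih =>
      rw [hc n, Finset.card_insert_of_notMem, ih]
      intro hmem'
      exact absurd ((hgInv n).2.2.1 _ hmem' _ (hmem n)) (lt_irrefl _)
  refine ⟨s, hmono, fun n =>
    ⟨(g n).2.1, (g n).2.2, hcard n, hcoe n, (hgInv n).2.1, ?_, (hgInv n).2.2.2⟩⟩
  rintro y ⟨j, hj, rfl⟩
  exact hdec n j hj (hmem j)

section OpenCase

variable (X : Set InfCantor)

def rejects (b : Finset ℕ) (A : Set ℕ) : Prop :=
  ∀ C, C ⊆ A → C.Infinite → ¬ seg b C ⊆ X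

variable {X}

lemma rejects_mono {b : Finset ℕ} {A B : Set ℕ} (h : rejects X b A) (hBA : B ⊆ A) :
    rejects X b B := fun C hC hCi => h C (hC.trans hBA) hCi

/-- Galvin's sublemma: from a rejected pair, get a set all of whose one-point
extensions are rejected. -/
lemma galvin_step {b : Finset ℕ} {A : Set ℕ} (hA : A.Infinite) (hrej : rejects X b A) :
    ∃ B, B ⊆ A ∧ B.Infinite ∧ ∀ n ∈ B, rejects X (insert n b) (B ∩ Set.Ioi n) := by
  by_contra hcon
  push_neg at hcon
  have key : ∀ B, B ⊆ A → B.Infinite →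
      ∃ n ∈ B, ∃ C, C ⊆ B ∩ Set.Ioi n ∧ C.Infinite ∧ seg (insert n b) C ⊆ X := by
    intro B hBA hBi
    obtain ⟨n, hn, hnr⟩ := hcon B hBA hBi
    unfold rejects at hnr
    push_neg at hnr
    obtain ⟨C, h1, h2, h3⟩ := hnr
    exact ⟨n, hn, C, h1, h2, h3⟩
  -- chain
  obtain ⟨g, hg0, hgInv, hgRel⟩ := exists_chain
    (fun p : ℕ × Set ℕ => p.2 ⊆ A ∧ p.2.Infinite)
    (fun p q => q.1 ∈ p.2 ∧ q.2 ⊆ p.2 ∩ Set.Ioi q.1 ∧ seg (insert q.1 b) q.2 ⊆ X)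
    (0, A) ⟨subset_rfl, hA⟩
    (by
      rintro ⟨v, B⟩ ⟨hBA, hBi⟩
      obtain ⟨n, hn, C, h1, h2, h3⟩ := key B hBA hBi
      exact ⟨(n, C), ⟨(h1.trans (Set.inter_subset_left)).trans hBA, h2⟩, hn, h1, h3⟩)
  set t : ℕ → ℕ := fun i => (g (i + 1)).1 with ht
  have hstep2 : ∀ n, (g (n + 1)).2 ⊆ (g n).2 :=
    fun n => ((hgRel n).2.1).trans Set.inter_subset_left
  have hdec : ∀ i j, i ≤ j → (g j).2 ⊆ (g i).2 := by
    intro i j hij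
    induction hij with
    | refl => exact subset_rfl
    | step _ ih => exact (hstep2 _).trans ih
  have htmem : ∀ i, t i ∈ (g i).2 := fun i => (hgRel i).1
  have htA : ∀ i, t i ∈ A := fun i => (hgInv i).1 (htmem i)
  have htmono : StrictMono t := by
    apply strictMono_nat_of_lt_succ
    intro n
    have h1 : t (n + 1) ∈ (g (n + 1)).2 := htmem (n + 1)
    have h2 := (hgRel n).2.1 h1
    exact h2.2
  have hCinf : (Set.range t).Infinite := Set.infinite_range_of_injective htmono.injective
  have hCA : Set.range t ⊆ A := by rintro y ⟨i, rfl⟩; exact htA i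
  apply hrej (Set.range t) hCA hCinf
  intro f hf
  -- f ∈ seg b (range t); find least index i with t i ∈ f
  have hne : {i | f.1 (t i) = true}.Nonempty := by
    obtain ⟨n, hn1, hn2⟩ := (f.2.diff b.finite_toSet).nonempty
    have : n ∈ Set.range t := by
      rcases hf.2 n hn1 with h | h
      · exact absurd h hn2
      · exact h
    obtain ⟨i, rfl⟩ := this
    exact ⟨i, hn1⟩
  set i := sInf {i | f.1 (t i) = true} with hidef
  have hi : f.1 (t i) = true := Nat.sInf_mem hne
  -- f ∈ seg (insert (t i) b) ((g (i+1)).2)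
  have hfseg : f ∈ seg (insert (t i) b) ((g (i + 1)).2) := by
    constructor
    · intro m hm
      rcases Finset.mem_insert.mp hm with rfl | hm
      · exact hi
      · exact hf.1 m hm
    · intro n hn
      rcases hf.2 n hn with h | h
      · exact Or.inl (Finset.mem_insert_of_mem h)
      · obtain ⟨j, rfl⟩ := h
        have hij : i ≤ j := Nat.sInf_le hn
        rcases eq_or_lt_of_le hij with rfl | hlt
        · exact Or.inl (Finset.mem_insert_self _ _)
        · exact Or.inr (hdec (i + 1) j hlt (htmem j))
  exact (hgRel i).2.2 hfseg

lemma famR3 (F : Finset (Finset ℕ)) (A : Set ℕ) (hA : A.Infinite)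
    (hrej : ∀ b ∈ F, rejects X b A) :
    ∃ B, B ⊆ A ∧ B.Infinite ∧ ∀ b ∈ F, ∀ n ∈ B, rejects X (insert n b) (B ∩ Set.Ioi n) := by
  induction F using Finset.induction generalizing A with
  | empty => exact ⟨A, subset_rfl, hA, by simp⟩
  | @insert b F hbF ih =>
    obtain ⟨B₁, h1, h2, h3⟩ := galvin_step hA (hrej b (Finset.mem_insert_self b F))
    obtain ⟨B, hB1, hB2, hB3⟩ := ih B₁ h2
      (fun b' hb' => rejects_mono (hrej b' (Finset.mem_insert_of_mem hb')) h1)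
    refine ⟨B, hB1.trans h1, hB2, ?_⟩
    intro b' hb' n hn
    rcases Finset.mem_insert.mp hb' with rfl | hb'
    · exact rejects_mono (h3 n (hB1 hn)) (Set.inter_subset_inter_left _ hB1)
    · exact hB3 b' hb' n hn

theorem CR_of_isOpen {X : Set InfCantor} (hX : IsOpen X) : CR X := by
  intro a A hA hbel
  by_cases hacc : ∃ B, B ⊆ A ∧ B.Infinite ∧ seg a B ⊆ X
  · obtain ⟨B, h1, h2, h3⟩ := hacc
    exact ⟨B, h1, h2, Or.inl h3⟩
  push_neg at hacc
  have hrej : rejects X a A := fun C h1 h2 => hacc C h1 h2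
  obtain ⟨s, hmono, hprop⟩ := fusion
    (fun c C => ∀ b, a ⊆ b → (↑b : Set ℕ) ⊆ ↑a ∪ ↑c → rejects X b C) A hA
    (by
      intro b hab hba
      have hba' : b = a := Finset.Subset.antisymm (fun x hx => by
        have := hba hx
        simpa using this) hab
      rw [hba']
      exact hrej)
    (by
      intro c C hCinf hCA hord hQ
      have hFrej : ∀ b ∈ (a ∪ c).powerset.filter (a ⊆ ·), rejects X b C := by
        intro b hb
        rw [Finset.mem_filter, Finset.mem_powerset] at hb
        exact hQ b hb.2 (by rw [← Finset.coe_union]; exact Finset.coe_subset.mpr hb.1)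
      obtain ⟨B₁, hB1, hB2, hB3⟩ := famR3 _ C hCinf hFrej
      set n := sInf B₁ with hn
      have hnB : n ∈ B₁ := Nat.sInf_mem hB2.nonempty
      refine ⟨n, B₁ ∩ Set.Ioi n, hB1 hnB, Set.inter_subset_left.trans hB1, ?_,
        fun y hy => hy.2, ?_⟩
      · have heq : B₁ ∩ Set.Ioi n = B₁ \ Set.Iic n := by
          ext x
          simp only [Set.mem_inter_iff, Set.mem_Ioi, Set.mem_diff, Set.mem_Iic, not_le]
        rw [heq]
        exact hB2.diff (Set.finite_Iic n)
      · intro b hab hbsub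
        by_cases hnb : n ∈ b
        · have hab' : a ⊆ b.erase n := by
            intro x hx
            exact Finset.mem_erase.mpr ⟨Nat.ne_of_lt (hbel x hx n (hCA (hB1 hnB))), hab hx⟩
          have hsub' : b.erase n ⊆ a ∪ c := by
            intro x hx
            obtain ⟨hxne, hxb⟩ := Finset.mem_erase.mp hx
            have hx2 := hbsub hxb
            simp only [Finset.coe_insert, Set.mem_union, Set.mem_insert_iff,
              Finset.mem_coe] at hx2
            rw [Finset.mem_union]
            rcases hx2 with h | h
            · exact Or.inl h
            · rcases h with rfl | h
              · exact absurd rfl hxne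
              · exact Or.inr h
          have hmemF : b.erase n ∈ (a ∪ c).powerset.filter (a ⊆ ·) := by
            rw [Finset.mem_filter, Finset.mem_powerset]; exact ⟨hsub', hab'⟩
          have := hB3 _ hmemF n hnB
          rwa [Finset.insert_erase hnb] at this
        · have hsub' : (↑b : Set ℕ) ⊆ ↑a ∪ ↑c := by
            intro x hx
            have hx2 := hbsub hx
            simp only [Finset.coe_insert, Set.mem_union, Set.mem_insert_iff,
              Finset.mem_coe] at hx2 ⊢
            rcases hx2 with h | h
            · exact Or.inl h
            · rcases h with rfl | h
              · exact absurd (Finset.mem_coe.mp hx) hnb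
              · exact Or.inr h
          exact rejects_mono (hQ b hab hsub') (Set.inter_subset_left.trans hB1))
  set B := Set.range s with hB
  have hrangeA : B ⊆ A := by
    rintro y ⟨n, rfl⟩
    obtain ⟨c, C, _, _, hCA, hsC, _⟩ := hprop n
    exact hCA (hsC ⟨n, Set.self_mem_Ici, rfl⟩)
  refine ⟨B, hrangeA, Set.infinite_range_of_injective hmono.injective, Or.inr ?_⟩
  rw [Set.eq_empty_iff_forall_notMem]
  rintro f ⟨hfseg, hfX⟩
  obtain ⟨N, hN⟩ := open_cylinder hX hfX
  set b := (Finset.range (s N)).filter (fun m => f.1 m = true) with hbdef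
  have hsNA : s N ∈ A := hrangeA ⟨N, rfl⟩
  have hab : a ⊆ b := by
    intro x hx
    rw [hbdef, Finset.mem_filter, Finset.mem_range]
    exact ⟨hbel x hx (s N) hsNA, hfseg.1 x hx⟩
  have hbsub : (↑b : Set ℕ) ⊆ ↑a ∪ s '' Set.Iio N := by
    intro x hx
    rw [Finset.mem_coe, hbdef, Finset.mem_filter, Finset.mem_range] at hx
    rcases hfseg.2 x hx.2 with h | h
    · exact Or.inl h
    · obtain ⟨j, rfl⟩ := h
      exact Or.inr ⟨j, hmono.lt_iff_lt.mp hx.1, rfl⟩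
  obtain ⟨c, C, hcard, hcoe, hCA, hsC, hQ⟩ := hprop N
  have hrejb : rejects X b (s '' Set.Ici N) :=
    rejects_mono (hQ b hab (by rw [hcoe]; exact hbsub)) hsC
  apply hrejb (s '' Set.Ici N) subset_rfl
    ((Set.Ici_infinite N).image hmono.injective.injOn)
  intro g' hg'
  apply hN g'
  intro i hi
  have hiN : i < s N := lt_of_lt_of_le hi hmono.le_apply
  apply bool_eq_of_iff
  constructor
  · intro hgi
    rcases hg'.2 i hgi with h | h
    · rw [hbdef, Finset.mem_filter] at h
      exact h.2
    · obtain ⟨j, hj, rfl⟩ := h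
      exact absurd hiN (not_lt.mpr (hmono.monotone hj))
  · intro hfi
    have hib : i ∈ b := by
      rw [hbdef, Finset.mem_filter, Finset.mem_range]
      exact ⟨hiN, hfi⟩
    exact hg'.1 i hib

end OpenCase

section UnionCase

variable {𝒜 : ℕ → Set InfCantor}

lemma decideFam (hCR : ∀ m, CR (𝒜 m)) (F : Finset (Finset ℕ × ℕ)) (A : Set ℕ)
    (hA : A.Infinite) (hbel : ∀ p ∈ F, bel p.1 A) :
    ∃ B, B ⊆ A ∧ B.Infinite ∧ ∀ p ∈ F, seg p.1 B ⊆ 𝒜 p.2 ∨ seg p.1 B ∩ 𝒜 p.2 = ∅ := by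
  induction F using Finset.induction generalizing A with
  | empty => exact ⟨A, subset_rfl, hA, by simp⟩
  | @insert p F hpF ih =>
    obtain ⟨B₁, h1, h2, h3⟩ := hCR p.2 p.1 A hA (hbel p (Finset.mem_insert_self p F))
    obtain ⟨B, hB1, hB2, hB3⟩ := ih B₁ h2
      (fun q hq x hx y hy => hbel q (Finset.mem_insert_of_mem hq) x hx y (h1 hy))
    refine ⟨B, hB1.trans h1, hB2, ?_⟩
    intro q hq
    rcases Finset.mem_insert.mp hq with rfl | hq
    · rcases h3 with h3 | h3
      · exact Or.inl ((seg_mono hB1).trans h3)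
      · exact Or.inr (Set.eq_empty_of_subset_empty
          (h3 ▸ Set.inter_subset_inter_left _ (seg_mono hB1)))
    · exact hB3 q hq

theorem CR_iUnion (hCR : ∀ m, CR (𝒜 m)) : CR (⋃ m, 𝒜 m) := by
  intro a A hA hbel
  obtain ⟨s, hmono, hprop⟩ := fusion
    (fun c C => ∀ b m, a ⊆ b → (↑b : Set ℕ) ⊆ ↑a ∪ ↑c → m < c.card →
      (seg b C ⊆ 𝒜 m ∨ seg b C ∩ 𝒜 m = ∅)) A hA
    (by intro b m _ _ hm; simp at hm)
    (by
      intro c C hCinf hCA hord hQ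
      set n := sInf C with hn
      have hnC : n ∈ C := Nat.sInf_mem hCinf.nonempty
      have hC'inf : (C ∩ Set.Ioi n).Infinite := by
        have heq : C ∩ Set.Ioi n = C \ Set.Iic n := by
          ext x
          simp only [Set.mem_inter_iff, Set.mem_Ioi, Set.mem_diff, Set.mem_Iic, not_le]
        rw [heq]; exact hCinf.diff (Set.finite_Iic n)
      set F := ((a ∪ insert n c).powerset.filter (a ⊆ ·)) ×ˢ Finset.range (c.card + 1) with hF
      have hbelF : ∀ p ∈ F, bel p.1 (C ∩ Set.Ioi n) := by
        intro p hp x hx y hy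
        rw [hF, Finset.mem_product, Finset.mem_filter, Finset.mem_powerset] at hp
        have hxm := hp.1.1 hx
        rcases Finset.mem_union.mp hxm with h | h
        · exact hbel x h y (hCA hy.1)
        · rcases Finset.mem_insert.mp h with rfl | h
          · exact hy.2
          · exact hord x h y hy.1
      obtain ⟨B, hB1, hB2, hB3⟩ := decideFam hCR F (C ∩ Set.Ioi n) hC'inf hbelF
      refine ⟨n, B, hnC, hB1.trans Set.inter_subset_left, hB2, fun y hy => (hB1 hy).2, ?_⟩
      intro b m hab hbsub hm
      have hnc : n ∉ c := fun h => absurd (hord n h n hnC) (lt_irrefl n)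
      rw [Finset.card_insert_of_notMem hnc] at hm
      have hbF : (b, m) ∈ F := by
        rw [hF, Finset.mem_product, Finset.mem_filter, Finset.mem_powerset]
        refine ⟨⟨?_, hab⟩, Finset.mem_range.mpr hm⟩
        rw [← Finset.coe_subset, Finset.coe_union]
        exact hbsub
      exact hB3 (b, m) hbF)
  set T : ℕ → Set ℕ := fun n => s '' Set.Ici n with hT
  have hrangeA : Set.range s ⊆ A := by
    rintro y ⟨n, rfl⟩
    obtain ⟨c, C, _, _, hCA, hsC, _⟩ := hprop n
    exact hCA (hsC ⟨n, Set.self_mem_Ici, rfl⟩)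
  have hkey : ∀ n b m, a ⊆ b → (↑b : Set ℕ) ⊆ ↑a ∪ s '' Set.Iio n → m < n →
      (seg b (T n) ⊆ 𝒜 m ∨ seg b (T n) ∩ 𝒜 m = ∅) := by
    intro n b m hab hbsub hm
    obtain ⟨c, C, hcard, hcoe, hCA, hsC, hQ⟩ := hprop n
    rcases hQ b m hab (by rw [hcoe]; exact hbsub) (by rw [hcard]; exact hm) with h | h
    · exact Or.inl ((seg_mono hsC).trans h)
    · exact Or.inr (Set.eq_empty_of_subset_empty
        (h ▸ Set.inter_subset_inter_left _ (seg_mono hsC)))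
  set X : Set InfCantor := ⋃ (n : ℕ), ⋃ (m : ℕ), ⋃ (b : Finset ℕ),
    ⋃ (_ : m < n ∧ a ⊆ b ∧ (↑b : Set ℕ) ⊆ ↑a ∪ s '' Set.Iio n ∧ seg b (T n) ⊆ 𝒜 m),
    {f : InfCantor | ∀ i, i < s n → (f.1 i = true ↔ i ∈ b)} with hXdef
  have hXopen : IsOpen X := by
    refine isOpen_iUnion fun n => isOpen_iUnion fun m => isOpen_iUnion fun b =>
      isOpen_iUnion fun _ => ?_
    have heq : {f : InfCantor | ∀ i, i < s n → (f.1 i = true ↔ i ∈ b)} =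
        ⋂ i : Fin (s n), {f : InfCantor | f.1 i = true ↔ (i : ℕ) ∈ b} := by
      ext f
      simp only [Set.mem_setOf_eq, Set.mem_iInter]
      exact ⟨fun h i => h i i.2, fun h i hi => h ⟨i, hi⟩⟩
    rw [heq]
    refine isOpen_iInter_of_finite fun i => ?_
    have hpre : {f : InfCantor | f.1 i = true ↔ (i : ℕ) ∈ b} =
        (fun f : InfCantor => f.1 i) ⁻¹' {y : Bool | y = true ↔ (i : ℕ) ∈ b} := rfl
    rw [hpre]
    exact (isOpen_discrete _).preimage ((continuous_apply (i : ℕ)).comp continuous_subtype_val)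
  obtain ⟨B, hBsub, hBinf, hcase⟩ := CR_of_isOpen hXopen a (Set.range s)
    (Set.infinite_range_of_injective hmono.injective)
    (fun x hx y hy => hbel x hx y (hrangeA hy))
  have htrace : ∀ f ∈ seg a B, ∀ (n : ℕ) (b : Finset ℕ), a ⊆ b →
      (↑b : Set ℕ) ⊆ ↑a ∪ s '' Set.Iio n → (∀ i, i < s n → (f.1 i = true ↔ i ∈ b)) →
      f ∈ seg b (T n) := by
    intro f hf n b hab hbsub hcyl
    have hsnA : s n ∈ A := hrangeA ⟨n, rfl⟩
    constructor
    · intro i hi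
      have hilt : i < s n := by
        rcases hbsub hi with h | h
        · exact hbel i h (s n) hsnA
        · obtain ⟨j, hj, rfl⟩ := h
          exact hmono hj
      exact (hcyl i hilt).mpr hi
    · intro i hfi
      by_cases hilt : i < s n
      · exact Or.inl ((hcyl i hilt).mp hfi)
      · rcases hf.2 i hfi with h | h
        · exact absurd (hbel i h (s n) hsnA) hilt
        · obtain ⟨j, rfl⟩ := hBsub h
          exact Or.inr ⟨j, hmono.le_iff_le.mp (not_lt.mp hilt), rfl⟩
  refine ⟨B, hBsub.trans hrangeA, hBinf, ?_⟩
  rcases hcase with hcase | hcase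
  · refine Or.inl fun f hf => ?_
    have hfX := hcase hf
    simp only [hXdef, Set.mem_iUnion] at hfX
    obtain ⟨n, m, b, ⟨hmn, hab, hbsub, hseg⟩, hcyl⟩ := hfX
    exact Set.mem_iUnion.mpr ⟨m, hseg (htrace f hf n b hab hbsub hcyl)⟩
  · refine Or.inr ?_
    rw [Set.eq_empty_iff_forall_notMem]
    rintro f ⟨hf, hfU⟩
    obtain ⟨m, hfm⟩ := Set.mem_iUnion.mp hfU
    set b := (Finset.range (s (m + 1))).filter (fun i => f.1 i = true) with hbdef
    have hsA : s (m + 1) ∈ A := hrangeA ⟨m + 1, rfl⟩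
    have hab : a ⊆ b := by
      intro x hx
      rw [hbdef, Finset.mem_filter, Finset.mem_range]
      exact ⟨hbel x hx _ hsA, hf.1 x hx⟩
    have hbsub : (↑b : Set ℕ) ⊆ ↑a ∪ s '' Set.Iio (m + 1) := by
      intro x hx
      rw [Finset.mem_coe, hbdef, Finset.mem_filter, Finset.mem_range] at hx
      rcases hf.2 x hx.2 with h | h
      · exact Or.inl h
      · obtain ⟨j, rfl⟩ := hBsub h
        exact Or.inr ⟨j, hmono.lt_iff_lt.mp hx.1, rfl⟩
    have hcyl : ∀ i, i < s (m + 1) → (f.1 i = true ↔ i ∈ b) := by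
      intro i hi
      rw [hbdef, Finset.mem_filter, Finset.mem_range]
      exact ⟨fun h => ⟨hi, h⟩, fun h => h.2⟩
    have hfT : f ∈ seg b (T (m + 1)) := htrace f hf (m + 1) b hab hbsub hcyl
    rcases hkey (m + 1) b m hab hbsub (Nat.lt_succ_self m) with h | h
    · apply Set.eq_empty_iff_forall_notMem.mp hcase f
      refine ⟨hf, ?_⟩
      simp only [hXdef, Set.mem_iUnion]
      exact ⟨m + 1, m, b, ⟨Nat.lt_succ_self m, hab, hbsub, h⟩, hcyl⟩
    · exact Set.eq_empty_iff_forall_notMem.mp h f ⟨hfT, hfm⟩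

end UnionCase

theorem CR_of_measurable {X : Set InfCantor} (hX : MeasurableSet X) : CR X := by
  have hX' : @MeasurableSet InfCantor (MeasurableSpace.generateFrom {s : Set InfCantor | IsOpen s}) X := hX
  exact MeasurableSpace.generateFrom_induction {s : Set InfCantor | IsOpen s}
    (fun s _ => CR s) (fun t ht _ => CR_of_isOpen ht) CR_empty
    (fun t _ h => CR_compl h) (fun f _ hf => CR_iUnion hf) X hX'

lemma multi : ∀ (k : ℕ) (P : Fin k → Set InfCantor), (∀ i, CR (P i)) → ∀ A : Set ℕ, A.Infinite →
    ∃ B, B ⊆ A ∧ B.Infinite ∧ ((∃ i, seg ∅ B ⊆ P i) ∨ ∀ i, seg ∅ B ∩ P i = ∅) := by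
  intro k
  induction k with
  | zero => exact fun P _ A hA => ⟨A, subset_rfl, hA, Or.inr (fun i => i.elim0)⟩
  | succ k ih =>
    intro P hCR A hA
    obtain ⟨B₁, h1, h2, h3⟩ := hCR 0 ∅ A hA
      (fun x hx => absurd hx (Finset.notMem_empty x))
    rcases h3 with h3 | h3
    · exact ⟨B₁, h1, h2, Or.inl ⟨0, h3⟩⟩
    · obtain ⟨B, hB1, hB2, hB3⟩ := ih (fun i => P i.succ) (fun i => hCR i.succ) B₁ h2
      refine ⟨B, hB1.trans h1, hB2, ?_⟩
      rcases hB3 with h | h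
      · exact Or.inl ⟨h.choose.succ, h.choose_spec⟩
      · refine Or.inr fun i => ?_
        refine Fin.cases ?_ ?_ i
        · exact Set.eq_empty_of_subset_empty
            (h3 ▸ Set.inter_subset_inter_left _ (seg_mono hB1))
        · exact fun j => h j

end GPaux


theorem galvin_prikry_partition (k : ℕ) (P : Fin k → Set InfCantor)
    (hmeas : ∀ i, MeasurableSet (P i)) (hcover : (⋃ i, P i) = Set.univ) :
    ∃ H : Set ℕ, H.Infinite ∧ ∃ i : Fin k, cube H ⊆ P i := by
  have hCR : ∀ i, GPaux.CR (P i) := fun i => GPaux.CR_of_measurable (hmeas i)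
  obtain ⟨B, hB1, hB2, hB3⟩ := GPaux.multi k P hCR Set.univ Set.infinite_univ
  rcases hB3 with ⟨i, hi⟩ | h
  · refine ⟨B, hB2, i, fun f hf => hi ?_⟩
    exact ⟨fun n hn => absurd hn (Finset.notMem_empty n), fun n hn => Or.inr (hf n hn)⟩
  · exfalso
    have hmem : GPaux.indic B hB2 ∈ (⋃ i, P i) := hcover ▸ Set.mem_univ _
    obtain ⟨i, hi⟩ := Set.mem_iUnion.mp hmem
    exact Set.eq_empty_iff_forall_notMem.mp (h i) _ ⟨GPaux.indic_mem_seg B hB2, hi⟩
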